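/- In the avg-flowNCG, every Nash equilibrium network is connected. -/

import Mathlib

open Finset

noncomputable section

/-- Total capacity crossing the cut `(A, Aᶜ)`: each unordered crossing pair
is counted once (for symmetric capacities). -/
def cutCap {V : Type*} [Fintype V] [DecidableEq V] (c : V → V → ℕ) (A : Finset V) : ℕ :=
  ∑ u ∈ A, ∑ v ∈ Aᶜ, c u v

/-- Local edge connectivity between `v` and `w`: the minimum capacity of a cut
separating `v` from `w`. -/
def localConn {V : Type*} [Fintype V] [DecidableEq V] (c : V → V → ℕ) (v w : V) : ℕ :=
  sInf {m | ∃ A : Finset V, v ∈ A ∧ w ∉ A ∧ cutCap c A = m}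

/-- Edge connectivity of the capacitated graph: the minimum capacity of a
nontrivial cut. -/
def edgeConn {V : Type*} [Fintype V] [DecidableEq V] (c : V → V → ℕ) : ℕ :=
  sInf {m | ∃ A : Finset V, A.Nonempty ∧ A ≠ Finset.univ ∧ cutCap c A = m}

/-- Weighted degree of a vertex: sum of capacities of incident edges. -/
def wdeg {V : Type*} [Fintype V] [DecidableEq V] (c : V → V → ℕ) (v : V) : ℕ :=
  ∑ w, c v w

/-- The undirected capacity induced by the bought (directed) capacities `b`. -/
def cap {V : Type*} (b : V → V → ℕ) : V → V → ℕ := fun u v => b u v + b v u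

/-- A strategy profile is feasible for budget `k` if nobody buys a self-loop
and each agent's total bought capacity is at most `k`. -/
def Feasible {V : Type*} [Fintype V] (k : ℕ) (b : V → V → ℕ) : Prop :=
  ∀ v, b v v = 0 ∧ ∑ w, b v w ≤ k

/-- Utility of agent `v` in the min-flowNCG: the lexicographic pair of the
edge connectivity of the network and the number of well-connected nodes. -/
def minUtil {V : Type*} [Fintype V] [DecidableEq V] (b : V → V → ℕ) (v : V) : ℕ × ℕ :=
  (edgeConn (cap b),
    Set.ncard {w | w ≠ v ∧ edgeConn (cap b) < localConn (cap b) v w})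

/-- Nash equilibrium of the min-flowNCG: the profile is feasible and no agent
can strictly lexicographically improve its utility by a unilateral deviation. -/
def MinNE {V : Type*} [Fintype V] [DecidableEq V] (k : ℕ) (b : V → V → ℕ) : Prop :=
  Feasible k b ∧ ∀ (v : V) (s : V → ℕ), s v = 0 → (∑ w, s w) ≤ k →
    ¬ Prod.Lex (· < ·) (· < ·) (minUtil b v) (minUtil (Function.update b v s) v)

/-- Utility of agent `v` in the avg-flowNCG: the average local edge
connectivity (max-flow value) from `v` to every other node. -/
def avgUtil {V : Type*} [Fintype V] [DecidableEq V] (b : V → V → ℕ) (v : V) : ℚ :=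
  (∑ w ∈ Finset.univ.erase v, (localConn (cap b) v w : ℚ)) / ((Fintype.card V : ℚ) - 1)

/-- Nash equilibrium of the avg-flowNCG: the profile is feasible and no agent
can strictly increase its utility by a unilateral deviation. -/
def AvgNE {V : Type*} [Fintype V] [DecidableEq V] (k : ℕ) (b : V → V → ℕ) : Prop :=
  Feasible k b ∧ ∀ (v : V) (s : V → ℕ), s v = 0 → (∑ w, s w) ≤ k →
    avgUtil (Function.update b v s) v ≤ avgUtil b v

section Aux

set_option linter.unusedSectionVars false

variable {V : Type*} [Fintype V] [DecidableEq V]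

lemma cutCap_mono {c c' : V → V → ℕ} (h : ∀ z z', c z z' ≤ c' z z') (A : Finset V) :
    cutCap c A ≤ cutCap c' A :=
  Finset.sum_le_sum fun z _ => Finset.sum_le_sum fun z' _ => h z z'

lemma single_le_cutCap {c : V → V → ℕ} {A : Finset V} {a b : V} (ha : a ∈ A) (hb : b ∉ A) :
    c a b ≤ cutCap c A := by
  calc c a b ≤ ∑ z' ∈ Aᶜ, c a z' :=
        Finset.single_le_sum (fun _ _ => Nat.zero_le _) (Finset.mem_compl.2 hb)
    _ ≤ cutCap c A :=
        Finset.single_le_sum (f := fun z => ∑ z' ∈ Aᶜ, c z z') (fun _ _ => Nat.zero_le _) ha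

lemma cross {r : V → V → Prop} {A : Finset V} {x y : V}
    (hxy : Relation.ReflTransGen r x y) (hx : x ∈ A) :
    y ∉ A → ∃ a b, a ∈ A ∧ b ∉ A ∧ r a b := by
  induction hxy with
  | refl => exact fun hy => absurd hx hy
  | @tail m z hm hz ih =>
    intro hy
    by_cases hmA : m ∈ A
    · exact ⟨m, z, hmA, hy, hz⟩
    · exact ih hmA

lemma localConn_le {c : V → V → ℕ} {v w : V} {A : Finset V} (hv : v ∈ A) (hw : w ∉ A) :
    localConn c v w ≤ cutCap c A :=
  Nat.sInf_le ⟨A, hv, hw, rfl⟩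

lemma localConn_pos {c : V → V → ℕ} {v w : V}
    (h : Relation.ReflTransGen (fun a b => 0 < c a b) v w) (hvw : w ≠ v) :
    0 < localConn c v w := by
  have hmem : localConn c v w ∈ {m | ∃ A : Finset V, v ∈ A ∧ w ∉ A ∧ cutCap c A = m} :=
    Nat.sInf_mem ⟨cutCap c {v}, {v}, Finset.mem_singleton_self v, by simp [hvw], rfl⟩
  obtain ⟨A, hv, hw, hA⟩ := hmem
  obtain ⟨a, b', ha, hb', hr⟩ := cross h hv hw
  have := single_le_cutCap (c := c) ha hb'
  omega

lemma localConn_eq_zero {c : V → V → ℕ} {v w : V}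
    (h : ¬ Relation.ReflTransGen (fun a b => 0 < c a b) v w) :
    localConn c v w = 0 := by
  classical
  have h0 : cutCap c (Finset.univ.filter (Relation.ReflTransGen (fun a b => 0 < c a b) v)) = 0 := by
    apply Finset.sum_eq_zero; intro z hz
    apply Finset.sum_eq_zero; intro z' hz'
    simp only [Finset.mem_filter, Finset.mem_univ, true_and] at hz
    simp only [Finset.mem_compl, Finset.mem_filter, Finset.mem_univ, true_and] at hz'
    by_contra hc
    exact hz' (hz.tail (Nat.pos_of_ne_zero hc))
  have hle := localConn_le (c := c) (w := w)
    (A := Finset.univ.filter (Relation.ReflTransGen (fun a b => 0 < c a b) v))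
    (Finset.mem_filter.2 ⟨Finset.mem_univ v, Relation.ReflTransGen.refl⟩)
    (fun hw => h (Finset.mem_filter.1 hw).2)
  omega

lemma localConn_le_add {c c' : V → V → ℕ} {v w : V} (hvw : w ≠ v) (t : ℕ)
    (h : ∀ A : Finset V, cutCap c A ≤ cutCap c' A + t) :
    localConn c v w ≤ localConn c' v w + t := by
  have hmem : localConn c' v w ∈ {m | ∃ A : Finset V, v ∈ A ∧ w ∉ A ∧ cutCap c' A = m} :=
    Nat.sInf_mem ⟨cutCap c' {v}, {v}, Finset.mem_singleton_self v, by simp [hvw], rfl⟩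
  obtain ⟨A, hv, hw, hA⟩ := hmem
  calc localConn c v w ≤ cutCap c A := localConn_le hv hw
    _ ≤ cutCap c' A + t := h A
    _ = localConn c' v w + t := by rw [hA]

lemma sum_le_sum_add_one {α : Type*} [DecidableEq α] {s : Finset α} {f g : α → ℕ} (p0 : α)
    (h1 : ∀ p ∈ s, p ≠ p0 → f p ≤ g p) (h2 : f p0 ≤ g p0 + 1) :
    ∑ p ∈ s, f p ≤ (∑ p ∈ s, g p) + 1 := by
  by_cases hp : p0 ∈ s
  · rw [← Finset.add_sum_erase s f hp, ← Finset.add_sum_erase s g hp]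
    have := Finset.sum_le_sum (s := s.erase p0)
      (fun p hp' => h1 p (Finset.mem_of_mem_erase hp') (Finset.ne_of_mem_erase hp'))
    omega
  · have := Finset.sum_le_sum (s := s)
      (fun p hps => h1 p hps (fun h => hp (h ▸ hps)))
    omega

lemma cutCap_le_add_one {c c' : V → V → ℕ} {v u : V}
    (h1 : ∀ z z', ¬(z = v ∧ z' = u) → ¬(z = u ∧ z' = v) → c z z' ≤ c' z z')
    (h2 : c v u ≤ c' v u + 1) (h3 : c u v ≤ c' u v + 1)
    (A : Finset V) : cutCap c A ≤ cutCap c' A + 1 := by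
  have key : ∑ p ∈ A ×ˢ Aᶜ, c p.1 p.2 ≤ (∑ p ∈ A ×ˢ Aᶜ, c' p.1 p.2) + 1 := by
    by_cases hu : u ∈ A
    · refine sum_le_sum_add_one (u, v) ?_ h3
      rintro ⟨z, z'⟩ hp hne
      simp only [Finset.mem_product, Finset.mem_compl] at hp
      refine h1 z z' ?_ ?_
      · rintro ⟨rfl, rfl⟩; exact hp.2 hu
      · rintro ⟨rfl, rfl⟩; exact hne rfl
    · refine sum_le_sum_add_one (v, u) ?_ h2
      rintro ⟨z, z'⟩ hp hne
      simp only [Finset.mem_product, Finset.mem_compl] at hp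
      refine h1 z z' ?_ ?_
      · rintro ⟨rfl, rfl⟩; exact hne rfl
      · rintro ⟨rfl, rfl⟩; exact hu hp.1
  simpa [cutCap, Finset.sum_product] using key

lemma reach_lift {r r' : V → V → Prop} {w : V}
    (h : ∀ z z', Relation.ReflTransGen r w z → r z z' → r' z z') :
    ∀ w', Relation.ReflTransGen r w w' → Relation.ReflTransGen r' w w' := by
  intro w' hw'
  induction hw' with
  | refl => exact Relation.ReflTransGen.refl
  | @tail m z hm hz ih => exact ih.tail (h m z hm hz)

lemma cap_update_of_ne (b : V → V → ℕ) (v : V) (s : V → ℕ) {z z' : V}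
    (hz : z ≠ v) (hz' : z' ≠ v) :
    cap (Function.update b v s) z z' = cap b z z' := by
  simp [cap, Function.update_of_ne hz, Function.update_of_ne hz']

lemma cap_update_left (b : V → V → ℕ) (v : V) (s : V → ℕ) {z' : V} (hz' : z' ≠ v) :
    cap (Function.update b v s) v z' = s z' + b z' v := by
  simp [cap, Function.update_self, Function.update_of_ne hz']

lemma cap_update_right (b : V → V → ℕ) (v : V) (s : V → ℕ) {z : V} (hz : z ≠ v) :
    cap (Function.update b v s) z v = b z v + s z := by
  simp [cap, Function.update_self, Function.update_of_ne hz]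

lemma cap_reach_symm {b : V → V → ℕ} {x y : V}
    (h : Relation.ReflTransGen (fun a b' => 0 < cap b a b') x y) :
    Relation.ReflTransGen (fun a b' => 0 < cap b a b') y x := by
  have hs : Symmetric (fun a b' => 0 < cap b a b') := by
    intro a b' hab
    simp only [cap] at *
    omega
  exact (@Relation.ReflTransGen.stdSymm _ _ ⟨fun a b' hab => hs hab⟩).symm _ _ h

open Classical in
/-- The connected component of `v` in the positive-capacity graph, as a finset. -/
noncomputable def comp (c : V → V → ℕ) (v : V) : Finset V :=
  Finset.univ.filter (Relation.ReflTransGen (fun a b => 0 < c a b) v)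

lemma avg_aux {k : ℕ} {b : V → V → ℕ} (hk1 : 1 ≤ k) (hk : k < Fintype.card V)
    (hne : AvgNE k b) {v w : V}
    (hvw : ¬ Relation.ReflTransGen (fun a b' => 0 < cap b a b') v w)
    (hcard : (comp (cap b) v).card ≤ (comp (cap b) w).card) : False := by
  classical
  have hbvv : b v v = 0 := (hne.1 v).1
  have hvne : v ≠ w := by rintro rfl; exact hvw Relation.ReflTransGen.refl
  -- construct the deviation
  obtain ⟨s, hs0, hssum, hsw, hcut⟩ :
      ∃ s : V → ℕ, s v = 0 ∧ (∑ z, s z) ≤ k ∧ s w = b v w + 1 ∧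
        ∀ A : Finset V, cutCap (cap b) A ≤ cutCap (cap (Function.update b v s)) A + 1 := by
    by_cases hex : ∃ u, 0 < b v u
    · obtain ⟨u, hu⟩ := hex
      have huv : v ≠ u := by rintro rfl; omega
      have huw : u ≠ w := by
        rintro rfl
        exact hvw (Relation.ReflTransGen.single (by simp only [cap]; omega))
      refine ⟨Function.update (Function.update (b v) u (b v u - 1)) w (b v w + 1),
        ?_, ?_, ?_, ?_⟩
      · rw [Function.update_of_ne hvne, Function.update_of_ne huv]
        exact hbvv
      · have h1 : ∑ z, Function.update (Function.update (b v) u (b v u - 1)) w (b v w + 1) z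
            = (b v w + 1) + ∑ z ∈ Finset.univ.erase w, Function.update (b v) u (b v u - 1) z := by
          rw [Finset.erase_eq]
          exact Finset.sum_update_of_mem (Finset.mem_univ w) _ _
        have h2 : ∑ z ∈ Finset.univ.erase w, Function.update (b v) u (b v u - 1) z
            = (b v u - 1) + ∑ z ∈ (Finset.univ.erase w).erase u, b v z := by
          rw [Finset.erase_eq (Finset.univ.erase w)]
          exact Finset.sum_update_of_mem (Finset.mem_erase.2 ⟨huw, Finset.mem_univ u⟩) _ _
        have h3 : ∑ z, b v z = b v w + ∑ z ∈ Finset.univ.erase w, b v z :=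
          (Finset.add_sum_erase _ _ (Finset.mem_univ w)).symm
        have h4 : ∑ z ∈ Finset.univ.erase w, b v z
            = b v u + ∑ z ∈ (Finset.univ.erase w).erase u, b v z :=
          (Finset.add_sum_erase _ _ (Finset.mem_erase.2 ⟨huw, Finset.mem_univ u⟩)).symm
        have hb := (hne.1 v).2
        rw [h1, h2]
        omega
      · rw [Function.update_self]
      · set s := Function.update (Function.update (b v) u (b v u - 1)) w (b v w + 1) with hsdef
        have hsu : s u = b v u - 1 := by
          rw [hsdef, Function.update_of_ne huw, Function.update_self]
        have hsz : ∀ z, z ≠ u → z ≠ w → s z = b v z := by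
          intro z h1 h2
          rw [hsdef, Function.update_of_ne h2, Function.update_of_ne h1]
        have hsge : ∀ z, z ≠ u → b v z ≤ s z := by
          intro z h1
          by_cases h2 : z = w
          · subst h2; rw [hsdef, Function.update_self]; omega
          · rw [hsz z h1 h2]
        refine cutCap_le_add_one (v := v) (u := u) ?_ ?_ ?_
        · intro z z' hn1 hn2
          by_cases hz : z = v
          · by_cases hz' : z' = v
            · rw [hz, hz']
              simp [cap, hbvv]
            · have hz'u : z' ≠ u := fun h => hn1 ⟨hz, h⟩
              rw [hz, cap_update_left b v s hz']
              have := hsge z' hz'u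
              simp only [cap]
              omega
          · by_cases hz' : z' = v
            · have hzu : z ≠ u := fun h => hn2 ⟨h, hz'⟩
              rw [hz', cap_update_right b v s (by rw [← hz'] at hz ⊢; exact hz)]
              have := hsge z hzu
              simp only [cap]
              omega
            · rw [cap_update_of_ne b v s hz hz']
        · rw [cap_update_left b v s (fun h => huv h.symm), hsu]
          simp only [cap]
          omega
        · rw [cap_update_right b v s (fun h => huv h.symm), hsu]
          simp only [cap]
          omega
    · push_neg at hex
      have hbz : ∀ z, b v z = 0 := fun z => Nat.le_zero.1 (hex z)
      refine ⟨Function.update (b v) w (b v w + 1), ?_, ?_, ?_, ?_⟩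
      · rw [Function.update_of_ne hvne]; exact hbvv
      · have h1 : ∑ z, Function.update (b v) w (b v w + 1) z
            = (b v w + 1) + ∑ z ∈ Finset.univ.erase w, b v z := by
          rw [Finset.erase_eq]
          exact Finset.sum_update_of_mem (Finset.mem_univ w) _ _
        rw [h1, Finset.sum_eq_zero (fun z _ => hbz z), hbz w]
        omega
      · rw [Function.update_self]
      · intro A
        set s := Function.update (b v) w (b v w + 1) with hsdef
        have hsge : ∀ z, b v z ≤ s z := by
          intro z
          by_cases h2 : z = w
          · subst h2; rw [hsdef, Function.update_self]; omega
          · rw [hsdef, Function.update_of_ne h2]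
        have hmono : ∀ z z', cap b z z' ≤ cap (Function.update b v s) z z' := by
          intro z z'
          by_cases hz : z = v
          · by_cases hz' : z' = v
            · rw [hz, hz']; simp [cap, hbvv]
            · rw [hz, cap_update_left b v s hz']
              have := hsge z'
              simp only [cap]; omega
          · by_cases hz' : z' = v
            · rw [hz', cap_update_right b v s (by rw [← hz'] at hz ⊢; exact hz)]
              have := hsge z
              simp only [cap]; omega
            · rw [cap_update_of_ne b v s hz hz']
        have := cutCap_mono hmono A
        omega
  -- notation
  set B := Function.update b v s with hB
  set c := cap b with hc
  set c' := cap B with hc'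
  set X := comp c v with hX
  set Y := comp c w with hY
  have hvX : v ∈ X := Finset.mem_filter.2 ⟨Finset.mem_univ v, Relation.ReflTransGen.refl⟩
  have hwY : w ∈ Y := Finset.mem_filter.2 ⟨Finset.mem_univ w, Relation.ReflTransGen.refl⟩
  have hdisj : Disjoint X Y := by
    rw [Finset.disjoint_left]
    intro z hzX hzY
    exact hvw ((Finset.mem_filter.1 hzX).2.trans (cap_reach_symm (Finset.mem_filter.1 hzY).2))
  have hvY : v ∉ Y := Finset.disjoint_left.1 hdisj hvX
  -- gain: every vertex of Y is positively connected to v in the new graph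
  have hgain : ∀ z ∈ Y, 0 < localConn c' v z := by
    intro z hz
    have hwz : Relation.ReflTransGen (fun a b' => 0 < c a b') w z := (Finset.mem_filter.1 hz).2
    have hzv : z ≠ v := by rintro rfl; exact hvw (cap_reach_symm hwz)
    have hlift : Relation.ReflTransGen (fun a b' => 0 < c' a b') w z := by
      refine reach_lift (r := fun a b' => 0 < c a b') ?_ z hwz
      intro p q hp hq
      have hpv : p ≠ v := by rintro rfl; exact hvw (cap_reach_symm hp)
      have hqv : q ≠ v := by rintro rfl; exact hvw (cap_reach_symm (hp.tail hq))
      rw [hc', hB, cap_update_of_ne b v s hpv hqv]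
      exact hq
    have hstep : (fun a b' => 0 < c' a b') v w := by
      have h1 : c' v w = s w + b w v := by
        rw [hc', hB, cap_update_left b v s (fun h => hvne h.symm)]
      simp only [h1, hsw]
      omega
    exact localConn_pos (Relation.ReflTransGen.head hstep hlift) hzv
  -- sums over the erase-finset
  set E := Finset.univ.erase v with hE
  have hXE : X.erase v ⊆ E := fun z hz =>
    Finset.mem_erase.2 ⟨(Finset.mem_erase.1 hz).1, Finset.mem_univ z⟩
  have hYE : Y ⊆ E := fun z hz =>
    Finset.mem_erase.2 ⟨fun h => hvY (h ▸ hz), Finset.mem_univ z⟩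
  have hEo : ∑ z ∈ E, localConn c v z = ∑ z ∈ X.erase v, localConn c v z := by
    refine (Finset.sum_subset hXE ?_).symm
    intro z hzE hz
    refine localConn_eq_zero ?_
    intro hr'
    exact hz (Finset.mem_erase.2 ⟨(Finset.mem_erase.1 hzE).1,
      Finset.mem_filter.2 ⟨Finset.mem_univ z, hr'⟩⟩)
  have hXloss : ∑ z ∈ X.erase v, localConn c v z
      ≤ (∑ z ∈ X.erase v, localConn c' v z) + (X.erase v).card := by
    calc ∑ z ∈ X.erase v, localConn c v z ≤ ∑ z ∈ X.erase v, (localConn c' v z + 1) :=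
          Finset.sum_le_sum fun z hz => localConn_le_add (Finset.mem_erase.1 hz).1 1 hcut
      _ = _ := by rw [Finset.sum_add_distrib, Finset.sum_const, smul_eq_mul, mul_one]
  have hYgain : Y.card ≤ ∑ z ∈ Y, localConn c' v z := by
    calc Y.card = ∑ _z ∈ Y, 1 := by simp
      _ ≤ _ := Finset.sum_le_sum fun z hz => hgain z hz
  have hunion : (∑ z ∈ X.erase v, localConn c' v z) + ∑ z ∈ Y, localConn c' v z
      ≤ ∑ z ∈ E, localConn c' v z := by
    rw [← Finset.sum_union (hdisj.mono (Finset.erase_subset v X) le_rfl)]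
    exact Finset.sum_le_sum_of_subset (Finset.union_subset hXE hYE)
  have hXcard : (X.erase v).card = X.card - 1 := Finset.card_erase_of_mem hvX
  have hX1 : 1 ≤ X.card := Finset.card_pos.2 ⟨v, hvX⟩
  have hlt : ∑ z ∈ E, localConn c v z < ∑ z ∈ E, localConn c' v z := by omega
  -- pass to rationals
  have hq : avgUtil b v < avgUtil B v := by
    unfold avgUtil
    rw [← hc, ← hc', ← hE]
    have hd : (0 : ℚ) < (Fintype.card V : ℚ) - 1 := by
      have h2 : 2 ≤ Fintype.card V := by omega
      have : (2 : ℚ) ≤ (Fintype.card V : ℚ) := by exact_mod_cast h2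
      linarith
    rw [div_lt_div_iff_of_pos_right hd]
    exact_mod_cast hlt
  have hle := hne.2 v s hs0 hssum
  rw [← hB] at hle
  exact absurd hle (not_le.2 hq)

end Aux

/-- In the avg-flowNCG, every Nash equilibrium network is connected, i.e. the
resulting undirected capacitated graph has positive edge connectivity. -/
theorem avgNE_connected {V : Type*} [Fintype V] [DecidableEq V]
    (k : ℕ) (b : V → V → ℕ)
    (hk1 : 1 ≤ k) (hk : k < Fintype.card V)
    (hne : AvgNE k b) :
    0 < edgeConn (cap b) := by
  classical
  by_contra h0
  have hEzero : edgeConn (cap b) = 0 := by omega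
  have hcard2 : 2 ≤ Fintype.card V := by omega
  have hNE : Nonempty V := Fintype.card_pos_iff.1 (by omega)
  obtain ⟨v0⟩ := hNE
  have hSne : {m | ∃ A : Finset V, A.Nonempty ∧ A ≠ Finset.univ ∧ cutCap (cap b) A = m}.Nonempty := by
    refine ⟨cutCap (cap b) {v0}, {v0}, ⟨v0, Finset.mem_singleton_self v0⟩, ?_, rfl⟩
    intro h
    have hcu : ({v0} : Finset V).card = (Finset.univ : Finset V).card := by rw [h]
    rw [Finset.card_singleton, Finset.card_univ] at hcu
    omega
  unfold edgeConn at hEzero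
  have h0mem : (0 : ℕ) ∈ {m | ∃ A : Finset V, A.Nonempty ∧ A ≠ Finset.univ ∧ cutCap (cap b) A = m} := by
    rcases Nat.sInf_eq_zero.1 hEzero with h | h
    · exact h
    · rw [h] at hSne; exact absurd hSne (by simp)
  obtain ⟨A, hAne, hAu, hA0⟩ := h0mem
  obtain ⟨v, hvA⟩ := hAne
  obtain ⟨w, hwA⟩ : ∃ w, w ∉ A := by
    by_contra hcon
    push_neg at hcon
    exact hAu (Finset.eq_univ_iff_forall.2 hcon)
  have hnr : ¬ Relation.ReflTransGen (fun a b' => 0 < cap b a b') v w := by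
    intro hR
    obtain ⟨a, b', ha, hb', hrr⟩ := cross hR hvA hwA
    have := single_le_cutCap (c := cap b) ha hb'
    omega
  have hnr' : ¬ Relation.ReflTransGen (fun a b' => 0 < cap b a b') w v :=
    fun hR => hnr (cap_reach_symm hR)
  rcases le_total ((comp (cap b) v).card) ((comp (cap b) w).card) with h | h
  · exact avg_aux hk1 hk hne hnr h
  · exact avg_aux hk1 hk hne hnr' h
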